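/- Under the setting of the unconstrained EAG potential decrease (monotone L-Lipschitz F with a zero z*, step size η ∈ (0, 1/(√3 L))), for all k ≥ 2: (k²/4)·‖ηF(z_k)‖² ≤ (1+ηL)²‖z₀ − z*‖² + (η²L²/(1−η²L²))·∑_{t=2}^{k−1} ‖ηF(z_t)‖². -/

import Mathlib

open RealInnerProductSpace

set_option maxHeartbeats 1000000

lemma step_core {E : Type*} [NormedAddCommGroup E] [InnerProductSpace ℝ E]
    (a b c d : E) (K s : ℝ) (hK : 1 ≤ K) (hs : 0 < s) (hs3 : s < 1/3)
    (hlip : ‖c - b‖^2 ≤ s * ‖a - b‖^2)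
    (hmon : 0 ≤ ⟪a - c, b + (1/(K+1)) • d⟫) :
    (K+1)*(K+2)/2 * ‖c‖^2 + K*⟪c,d⟫ - (K+1)*⟪c,b⟫ ≤
      K*(K+1)/2 * ‖a‖^2 + K*⟪a,d⟫ + s/(1-s)*‖c‖^2 := by
  have hK1 : (0:ℝ) < K + 1 := by linarith
  have hs1 : (0:ℝ) < 1 - s := by linarith
  set p : ℝ := (K+1)*(1-s) with hp
  set q : ℝ := 2*s - (K+1)*(1-s) with hq
  have eX : ‖a-b‖^2 = ‖a‖^2 - 2*⟪a,b⟫ + ‖b‖^2 := by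
    rw [@norm_sub_sq_real]
  have eY : ‖c-b‖^2 = ‖c‖^2 - 2*⟪c,b⟫ + ‖b‖^2 := by
    rw [@norm_sub_sq_real]
  have eN : ‖p • b + q • c‖^2 = p^2*‖b‖^2 + 2*(p*q)*⟪b,c⟫ + q^2*‖c‖^2 := by
    rw [@norm_add_sq_real, norm_smul, norm_smul, real_inner_smul_left,
      real_inner_smul_right, Real.norm_eq_abs, Real.norm_eq_abs, mul_pow, mul_pow,
      sq_abs, sq_abs]
    ring
  have eM : ⟪a - c, b + (1/(K+1)) • d⟫
      = ⟪a,b⟫ - ⟪c,b⟫ + (1/(K+1))*(⟪a,d⟫ - ⟪c,d⟫) := by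
    rw [inner_add_right, inner_sub_left, inner_sub_left, real_inner_smul_right,
      real_inner_smul_right]
    ring
  have ebc : ⟪b,c⟫ = ⟪c,b⟫ := real_inner_comm c b
  have key : (K*(K+1)/2 * ‖a‖^2 + K*⟪a,d⟫ + s/(1-s)*‖c‖^2)
      - ((K+1)*(K+2)/2 * ‖c‖^2 + K*⟪c,d⟫ - (K+1)*⟪c,b⟫)
      = (1-s)*(K+1)*(K-1)/4 * ‖a-b‖^2
        + (1/(4*s*(1-s))) * ‖p • b + q • c‖^2
        + (K*(K+1)/2 + (K+1)^2*(1-s)/(4*s)) * (s*‖a-b‖^2 - ‖c-b‖^2)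
        + K*(K+1) * ⟪a - c, b + (1/(K+1)) • d⟫ := by
    rw [eX, eY, eN, eM, ebc, hp, hq]
    field_simp
    ring
  have hT1 : (0:ℝ) ≤ (1-s)*(K+1)*(K-1)/4 * ‖a-b‖^2 := by
    have h0 : (0:ℝ) ≤ (1-s)*(K+1)*(K-1) :=
      mul_nonneg (mul_nonneg (by linarith) (by linarith)) (by linarith)
    have : (0:ℝ) ≤ (1-s)*(K+1)*(K-1)/4 := by linarith
    exact mul_nonneg this (sq_nonneg _)
  have hT2 : (0:ℝ) ≤ (1/(4*s*(1-s))) * ‖p • b + q • c‖^2 := by positivity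
  have hT3 : (0:ℝ) ≤ (K*(K+1)/2 + (K+1)^2*(1-s)/(4*s)) * (s*‖a-b‖^2 - ‖c-b‖^2) := by
    have h1 : (0:ℝ) ≤ K*(K+1)/2 + (K+1)^2*(1-s)/(4*s) := by positivity
    have h2 : (0:ℝ) ≤ s*‖a-b‖^2 - ‖c-b‖^2 := by linarith
    exact mul_nonneg h1 h2
  have hT4 : (0:ℝ) ≤ K*(K+1) * ⟪a - c, b + (1/(K+1)) • d⟫ := by
    have : (0:ℝ) ≤ K*(K+1) := mul_nonneg (by linarith) (by linarith)
    exact mul_nonneg this hmon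
  linarith

theorem stmt_7 {n : ℕ}
    (F : EuclideanSpace ℝ (Fin n) → EuclideanSpace ℝ (Fin n))
    (L η : ℝ) (hL : 0 < L)
    (hmono : ∀ z z', 0 ≤ ⟪F z - F z', z - z'⟫)
    (hlip : ∀ z z', ‖F z - F z'‖ ≤ L * ‖z - z'‖)
    (zstar : EuclideanSpace ℝ (Fin n)) (hzstar : F zstar = 0)
    (hη : 0 < η) (hηL : η < 1 / (Real.sqrt 3 * L))
    (z zh : ℕ → EuclideanSpace ℝ (Fin n))
    (hzh : ∀ k : ℕ, zh k = z k - η • F (z k) + (1/((k:ℝ)+1)) • (z 0 - z k))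
    (hz : ∀ k : ℕ, z (k+1) = z k - η • F (zh k) + (1/((k:ℝ)+1)) • (z 0 - z k)) :
    ∀ k : ℕ, 2 ≤ k →
      (k:ℝ)^2/4 * ‖η • F (z k)‖^2 ≤
        (1 + η*L)^2 * ‖z 0 - zstar‖^2
          + η^2*L^2/(1-η^2*L^2) * ∑ t ∈ Finset.Ico 2 k, ‖η • F (z t)‖^2 := by
  set s : ℝ := η^2*L^2 with hs_def
  set D : ℝ := ‖z 0 - zstar‖ with hD_def
  have hD : 0 ≤ D := norm_nonneg _
  have hsqrt3 : (0:ℝ) < Real.sqrt 3 := Real.sqrt_pos.mpr (by norm_num)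
  have hηL' : η * (Real.sqrt 3 * L) < 1 := by
    rw [← lt_div_iff₀ (by positivity)]; exact hηL
  have hs3 : s < 1/3 := by
    have h3 : Real.sqrt 3 ^ 2 = 3 := Real.sq_sqrt (by norm_num)
    have h4 : (η * (Real.sqrt 3 * L))^2 < 1 := by
      have h5 : 0 < η * (Real.sqrt 3 * L) := by positivity
      nlinarith
    rw [hs_def]
    nlinarith [h4, h3]
  have hs : 0 < s := by rw [hs_def]; positivity
  have hs1 : (0:ℝ) < 1 - s := by linarith
  -- Lipschitz for η-scaled operator, norms
  have lipn : ∀ x y : EuclideanSpace ℝ (Fin n),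
      ‖η • F x - η • F y‖ ≤ η * L * ‖x - y‖ := by
    intro x y
    have h1 : ‖η • F x - η • F y‖ = η * ‖F x - F y‖ := by
      rw [← smul_sub, norm_smul, Real.norm_eq_abs, abs_of_pos hη]
    rw [h1, mul_assoc]
    exact mul_le_mul_of_nonneg_left (hlip x y) hη.le
  have lipsq : ∀ x y : EuclideanSpace ℝ (Fin n),
      ‖η • F x - η • F y‖^2 ≤ s * ‖x - y‖^2 := by
    intro x y
    have h3 := lipn x y
    have h4 : (0:ℝ) ≤ ‖η • F x - η • F y‖ := norm_nonneg _
    have h5 : (0:ℝ) ≤ η * L * ‖x - y‖ := by positivity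
    rw [hs_def]
    nlinarith
  -- potential
  set V : ℕ → ℝ := fun j =>
    (j:ℝ)*((j:ℝ)+1)/2 * ‖η • F (z j)‖^2 + (j:ℝ) * ⟪η • F (z j), z j - z 0⟫ with hV_def
  -- one-step approximate decrease
  have step : ∀ k : ℕ, 1 ≤ k → V (k+1) ≤ V k + s/(1-s) * ‖η • F (z (k+1))‖^2 := by
    intro k hk
    have hK : (1:ℝ) ≤ (k:ℝ) := by exact_mod_cast hk
    have hK1 : (0:ℝ) < (k:ℝ) + 1 := by linarith
    have hzzh : z (k+1) - zh k = η • F (z k) - η • F (zh k) := by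
      rw [hz k, hzh k]; module
    have hlip' : ‖η • F (z (k+1)) - η • F (zh k)‖^2
        ≤ s * ‖η • F (z k) - η • F (zh k)‖^2 := by
      have := lipsq (z (k+1)) (zh k)
      rw [hzzh] at this
      exact this
    have hzz : z k - z (k+1) = η • F (zh k) + (1/((k:ℝ)+1)) • (z k - z 0) := by
      rw [hz k]; module
    have hmon' : 0 ≤ ⟪η • F (z k) - η • F (z (k+1)),
        η • F (zh k) + (1/((k:ℝ)+1)) • (z k - z 0)⟫ := by
      rw [← hzz, ← smul_sub, real_inner_smul_left]
      exact mul_nonneg hη.le (hmono (z k) (z (k+1)))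
    have core := step_core (η • F (z k)) (η • F (zh k)) (η • F (z (k+1)))
      (z k - z 0) (k:ℝ) s hK hs hs3 hlip' hmon'
    have hz10 : z (k+1) - z 0 = (1 - 1/((k:ℝ)+1)) • (z k - z 0) - η • F (zh k) := by
      rw [hz k]; module
    have hVk1 : V (k+1) = ((k:ℝ)+1)*((k:ℝ)+2)/2 * ‖η • F (z (k+1))‖^2
        + ((k:ℝ)+1) * ((1 - 1/((k:ℝ)+1))*⟪η • F (z (k+1)), z k - z 0⟫
          - ⟪η • F (z (k+1)), η • F (zh k)⟫) := by
      simp only [hV_def]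
      rw [hz10, inner_sub_right, real_inner_smul_right]
      push_cast
      ring
    have hcoef : ((k:ℝ)+1) * (1 - 1/((k:ℝ)+1)) = (k:ℝ) := by field_simp; ring
    have hVk : V k = (k:ℝ)*((k:ℝ)+1)/2 * ‖η • F (z k)‖^2
        + (k:ℝ) * ⟪η • F (z k), z k - z 0⟫ := rfl
    rw [hVk1, hVk]
    have expand : ((k:ℝ)+1) * ((1 - 1/((k:ℝ)+1))*⟪η • F (z (k+1)), z k - z 0⟫
          - ⟪η • F (z (k+1)), η • F (zh k)⟫)
        = (k:ℝ)*⟪η • F (z (k+1)), z k - z 0⟫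
          - ((k:ℝ)+1)*⟪η • F (z (k+1)), η • F (zh k)⟫ := by
      rw [mul_sub, ← mul_assoc, hcoef]
    rw [expand]
    linarith [core]
  -- lower bound on V k
  have lower : ∀ k : ℕ, (k:ℝ)*((k:ℝ)+1)/4 * ‖η • F (z k)‖^2 - D^2 ≤ V k := by
    intro k
    have hK0 : (0:ℝ) ≤ (k:ℝ) := Nat.cast_nonneg k
    have hsplit : ⟪η • F (z k), z k - z 0⟫
        = ⟪η • F (z k), z k - zstar⟫ + ⟪η • F (z k), zstar - z 0⟫ := by
      rw [← inner_add_right]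
      congr 1
      abel
    have h1 : 0 ≤ ⟪η • F (z k), z k - zstar⟫ := by
      have he : η • F (z k) = η • (F (z k) - F zstar) := by rw [hzstar, sub_zero]
      rw [he, real_inner_smul_left]
      exact mul_nonneg hη.le (hmono (z k) zstar)
    have h2 : -(‖η • F (z k)‖ * D) ≤ ⟪η • F (z k), zstar - z 0⟫ := by
      have h3 := abs_real_inner_le_norm (η • F (z k)) (zstar - z 0)
      have hn : ‖zstar - z 0‖ = D := by rw [hD_def, norm_sub_rev]
      rw [hn] at h3
      cases' abs_le.mp h3 with h _
      linarith
    have hVk : V k = (k:ℝ)*((k:ℝ)+1)/2 * ‖η • F (z k)‖^2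
        + (k:ℝ) * ⟪η • F (z k), z k - z 0⟫ := rfl
    rw [hVk, hsplit]
    have hKu := mul_le_mul_of_nonneg_left h2 hK0
    have hK1 := mul_le_mul_of_nonneg_left h1 hK0
    have hyoung : (k:ℝ) * (‖η • F (z k)‖ * D)
        ≤ (k:ℝ)*((k:ℝ)+1)/4 * ‖η • F (z k)‖^2 + D^2 := by
      nlinarith [sq_nonneg ((k:ℝ) * ‖η • F (z k)‖ - 2*D),
        mul_nonneg hK0 (sq_nonneg ‖η • F (z k)‖)]
    nlinarith [hKu, hK1, hyoung]
  -- bound on V 1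
  have hV1 : V 1 ≤ (2*(η*L) + (η*L)^2) * D^2 := by
    have ht : 0 < η * L := mul_pos hη hL
    have hts : s = (η*L)^2 := by rw [hs_def]; ring
    have ht3 : 3 * (η*L)^2 < 1 := by rw [← hts]; linarith
    have ht1 : η * L < 1 := by nlinarith
    have hzh0 : zh 0 = z 0 - η • F (z 0) := by
      have h := hzh 0
      simp only [Nat.cast_zero] at h
      rw [h]; module
    have hz1 : z 1 = z 0 - η • F (zh 0) := by
      have h := hz 0
      simp only [Nat.cast_zero] at h
      rw [h]; module
    have hb0 : ‖η • F (z 0)‖ ≤ η*L * D := by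
      have h0 : η • F (z 0) = η • F (z 0) - η • F zstar := by
        rw [hzstar, smul_zero, sub_zero]
      have h1 := lipn (z 0) zstar
      rw [← h0] at h1
      exact h1
    have hd1 : ‖η • F (z 0) - η • F (zh 0)‖ ≤ η*L * ‖η • F (z 0)‖ := by
      have h1 := lipn (z 0) (zh 0)
      have h2 : z 0 - zh 0 = η • F (z 0) := by rw [hzh0]; module
      rw [h2] at h1
      exact h1
    have hd2 : ‖η • F (z 1) - η • F (zh 0)‖ ≤ η*L * ‖η • F (z 0) - η • F (zh 0)‖ := by
      have h1 := lipn (z 1) (zh 0)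
      have h2 : z 1 - zh 0 = η • F (z 0) - η • F (zh 0) := by
        rw [hz1, hzh0]; module
      rw [h2] at h1
      exact h1
    have hA2 : ‖η • F (z 0) - η • F (zh 0)‖ ≤ η*L * (η*L * D) :=
      le_trans hd1 (mul_le_mul_of_nonneg_left hb0 ht.le)
    have hA3 : ‖η • F (z 1) - η • F (zh 0)‖ ≤ η*L * (η*L * (η*L * D)) :=
      le_trans hd2 (mul_le_mul_of_nonneg_left hA2 ht.le)
    have hw0 : ‖η • F (zh 0)‖ ≤ η*L * D + η*L * (η*L * D) := by
      have h1 : ‖η • F (zh 0)‖ ≤ ‖η • F (z 0)‖ + ‖η • F (z 0) - η • F (zh 0)‖ := by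
        have := norm_sub_le (η • F (z 0)) (η • F (z 0) - η • F (zh 0))
        simp only [sub_sub_cancel] at this
        exact this
      linarith
    have hu1 : ‖η • F (z 1)‖ ≤ η*L * (η*L * (η*L * D)) + (η*L * D + η*L * (η*L * D)) := by
      have h1 : ‖η • F (z 1)‖ ≤ ‖η • F (z 1) - η • F (zh 0)‖ + ‖η • F (zh 0)‖ := by
        have := norm_add_le (η • F (z 1) - η • F (zh 0)) (η • F (zh 0))
        simp only [sub_add_cancel] at this
        exact this
      linarith
    have hV1e : V 1 = ‖η • F (z 1)‖^2 - ⟪η • F (z 1), η • F (zh 0)⟫ := by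
      have h1 : z 1 - z 0 = -(η • F (zh 0)) := by rw [hz1]; module
      simp only [hV_def]
      rw [h1, inner_neg_right]
      push_cast
      ring
    have hV1i : V 1 = ⟪η • F (z 1), η • F (z 1) - η • F (zh 0)⟫ := by
      rw [hV1e, inner_sub_right, real_inner_self_eq_norm_sq]
    have hV1b : V 1 ≤ ‖η • F (z 1)‖ * ‖η • F (z 1) - η • F (zh 0)‖ := by
      rw [hV1i]
      exact real_inner_le_norm _ _
    have hprod : ‖η • F (z 1)‖ * ‖η • F (z 1) - η • F (zh 0)‖
        ≤ (η*L * (η*L * (η*L * D)) + (η*L * D + η*L * (η*L * D)))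
          * (η*L * (η*L * (η*L * D))) := by
      apply mul_le_mul hu1 hA3 (norm_nonneg _)
      have : (0:ℝ) ≤ η*L*D := by positivity
      nlinarith [mul_nonneg ht.le (mul_nonneg ht.le this), this, mul_nonneg ht.le this]
    have hfin : (η*L * (η*L * (η*L * D)) + (η*L * D + η*L * (η*L * D)))
          * (η*L * (η*L * (η*L * D))) ≤ (2*(η*L) + (η*L)^2) * D^2 := by
      have e : (η*L * (η*L * (η*L * D)) + (η*L * D + η*L * (η*L * D)))
          * (η*L * (η*L * (η*L * D)))
          = ((η*L)^4 + (η*L)^5 + (η*L)^6) * D^2 := by ring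
      rw [e]
      have h4 : (η*L)^4 ≤ (η*L)^2 := pow_le_pow_of_le_one ht.le ht1.le (by norm_num)
      have h5 : (η*L)^5 ≤ (η*L)^2 := pow_le_pow_of_le_one ht.le ht1.le (by norm_num)
      have h6 : (η*L)^6 ≤ (η*L)^2 := pow_le_pow_of_le_one ht.le ht1.le (by norm_num)
      have hlt : (η*L)^2 ≤ (η*L)^1 := pow_le_pow_of_le_one ht.le ht1.le (by norm_num)
      rw [pow_one] at hlt
      have hcoef : (η*L)^4 + (η*L)^5 + (η*L)^6 ≤ 2*(η*L) + (η*L)^2 := by linarith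
      exact mul_le_mul_of_nonneg_right hcoef (sq_nonneg D)
    linarith
  -- summed inequality
  have hsum : ∀ k : ℕ, 1 ≤ k →
      V k ≤ V 1 + s/(1-s) * ∑ t ∈ Finset.Ico 2 (k+1), ‖η • F (z t)‖^2 := by
    intro k hk
    induction k, hk using Nat.le_induction with
    | base => simp
    | succ m hm ih =>
      have h1 := step m hm
      have h2 : ∑ t ∈ Finset.Ico 2 (m+1+1), ‖η • F (z t)‖^2
          = (∑ t ∈ Finset.Ico 2 (m+1), ‖η • F (z t)‖^2) + ‖η • F (z (m+1))‖^2 :=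
        Finset.sum_Ico_succ_top (by omega) _
      rw [h2, mul_add]
      linarith
  -- conclusion
  intro k hk
  have hk1 : 1 ≤ k := by omega
  have h1 := hsum k hk1
  have h2 : ∑ t ∈ Finset.Ico 2 (k+1), ‖η • F (z t)‖^2
      = (∑ t ∈ Finset.Ico 2 k, ‖η • F (z t)‖^2) + ‖η • F (z k)‖^2 :=
    Finset.sum_Ico_succ_top (by omega) _
  rw [h2, mul_add] at h1
  have h3 := lower k
  have hK2 : (2:ℝ) ≤ (k:ℝ) := by exact_mod_cast hk
  have hσ : s/(1-s) ≤ 1/2 := by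
    rw [div_le_iff₀ hs1]
    linarith
  have habs : s/(1-s) * ‖η • F (z k)‖^2 ≤ (k:ℝ)/4 * ‖η • F (z k)‖^2 := by
    apply mul_le_mul_of_nonneg_right _ (sq_nonneg _)
    linarith
  have hring : (1 + η*L)^2 * D^2 = (2*(η*L) + (η*L)^2) * D^2 + D^2 := by ring
  have hid : (k:ℝ)^2/4 * ‖η • F (z k)‖^2
      = (k:ℝ)*((k:ℝ)+1)/4 * ‖η • F (z k)‖^2 - (k:ℝ)/4 * ‖η • F (z k)‖^2 := by ring
  rw [hid, hring]
  set u : ℝ := ‖η • F (z k)‖ with hu_def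
  set S : ℝ := ∑ t ∈ Finset.Ico 2 k, ‖η • F (z t)‖^2 with hS_def
  set Kr : ℝ := (k:ℝ) with hKr_def
  clear_value u S Kr V s D
  linarith [h1, h3, habs, hV1]
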